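/- arXiv:1903.04606 — 2 statements merged into one kernel-verified Lean document; each statement's English description precedes it below -/
import Mathlib

section
/- Let R be a Dedekind domain in which every ideal class contains a nonzero prime ideal, and suppose the class group contains an element g of order n > 2. Then there exist an irreducible x and irreducibles α₁,...,αₙ such that x divides α₁⋯αₙ but x divides no proper subproduct; consequently ω(x) ≥ n. -/
private lemma span_dvd_span_iff {R : Type*} [CommRing R] [IsDomain R] [IsDedekindDomain R]
    {x y : R} : Ideal.span {x} ∣ Ideal.span ({y} : Set R) ↔ x ∣ y := by
  rw [Ideal.dvd_iff_le, Ideal.span_singleton_le_span_singleton]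

theorem omega_ge_order_of_class
    {R : Type*} [CommRing R] [IsDomain R] [IsDedekindDomain R]
    (hprimes : ∀ c : ClassGroup R, ∃ (𝔭 : Ideal R) (h𝔭 : 𝔭 ∈ nonZeroDivisors (Ideal R)),
      𝔭.IsPrime ∧ 𝔭 ≠ ⊥ ∧ ClassGroup.mk0 ⟨𝔭, h𝔭⟩ = c)
    (g : ClassGroup R) (n : ℕ) (hn : 2 < n) (hg : orderOf g = n) :
    ∃ x : R, Irreducible x ∧ ∃ a : Fin n → R, (∀ i, Irreducible (a i)) ∧
      x ∣ ∏ i, a i ∧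
      ∀ T : Finset (Fin n), T ≠ Finset.univ → ¬x ∣ ∏ i ∈ T, a i := by
  obtain ⟨𝔭, h𝔭, h𝔭prime, h𝔭bot, h𝔭g⟩ := hprimes g
  obtain ⟨𝔮, h𝔮, h𝔮prime, h𝔮bot, h𝔮g⟩ := hprimes g⁻¹
  set P : (nonZeroDivisors (Ideal R)) := ⟨𝔭, h𝔭⟩ with hPdef
  set Q : (nonZeroDivisors (Ideal R)) := ⟨𝔮, h𝔮⟩ with hQdef
  have hP : Prime 𝔭 := Ideal.prime_of_isPrime h𝔭bot h𝔭prime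
  have hQ : Prime 𝔮 := Ideal.prime_of_isPrime h𝔮bot h𝔮prime
  have hne1 : g ≠ 1 := by
    intro h; rw [h, orderOf_one] at hg; omega
  have hPQne : 𝔭 ≠ 𝔮 := by
    intro h
    have hgg : g = g⁻¹ := by
      rw [← h𝔮g, ← h𝔭g]; congr 1; exact Subtype.ext h
    have h2 : g ^ 2 = 1 := by
      rw [pow_two, mul_eq_one_iff_eq_inv]; exact hgg
    have := orderOf_dvd_of_pow_eq_one h2
    rw [hg] at this
    have := Nat.le_of_dvd (by norm_num) this
    omega
  -- principality of 𝔭^i forces n ∣ i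
  have hpow : ∀ i : ℕ, (𝔭 ^ i).IsPrincipal → n ∣ i := by
    intro i hi
    have hmem : 𝔭 ^ i ∈ (nonZeroDivisors (Ideal R)) := (P ^ i).2
    have hcoe : ((P ^ i : (nonZeroDivisors (Ideal R))) : Ideal R) = 𝔭 ^ i := rfl
    have h1 : ClassGroup.mk0 (P ^ i) = 1 :=
      (ClassGroup.mk0_eq_one_iff (P ^ i).2).mpr (by rw [hcoe]; exact hi)
    rw [map_pow, h𝔭g] at h1
    have := orderOf_dvd_of_pow_eq_one h1
    rwa [hg] at this
  have h𝔭np : ¬ 𝔭.IsPrincipal := by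
    intro h
    have := Nat.le_of_dvd (by norm_num) (hpow 1 (by simpa using h))
    omega
  have h𝔮np : ¬ 𝔮.IsPrincipal := by
    intro h
    have hmem : 𝔮 ∈ (nonZeroDivisors (Ideal R)) := h𝔮
    have h1 : ClassGroup.mk0 Q = 1 := (ClassGroup.mk0_eq_one_iff h𝔮).mpr h
    rw [h𝔮g, inv_eq_one] at h1
    exact hne1 h1
  -- x generates 𝔭 ^ n
  have hPn : (𝔭 ^ n).IsPrincipal := by
    have hcoe : ((P ^ n : (nonZeroDivisors (Ideal R))) : Ideal R) = 𝔭 ^ n := rfl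
    have h1 : ClassGroup.mk0 (P ^ n) = 1 := by
      rw [map_pow, h𝔭g, ← hg, pow_orderOf_eq_one]
    have := (ClassGroup.mk0_eq_one_iff (P ^ n).2).mp h1
    rwa [hcoe] at this
  obtain ⟨x, hx⟩ := hPn.principal
  rw [Ideal.submodule_span_eq] at hx
  -- a generates 𝔭 * 𝔮
  have hPQ : (𝔭 * 𝔮).IsPrincipal := by
    have hcoe : ((P * Q : (nonZeroDivisors (Ideal R))) : Ideal R) = 𝔭 * 𝔮 := rfl
    have h1 : ClassGroup.mk0 (P * Q) = 1 := by
      rw [MonoidHom.map_mul, h𝔭g, h𝔮g, mul_inv_cancel]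
    have := (ClassGroup.mk0_eq_one_iff (P * Q).2).mp h1
    rwa [hcoe] at this
  obtain ⟨a, ha⟩ := hPQ.principal
  rw [Ideal.submodule_span_eq] at ha
  have h𝔭n0 : 𝔭 ^ n ≠ 0 := pow_ne_zero _ hP.ne_zero
  have hx0 : x ≠ 0 := by
    intro h; rw [h] at hx
    simp only [Set.singleton_zero, Ideal.span_zero] at hx
    exact h𝔭n0 (by rw [hx]; rfl)
  have ha0 : a ≠ 0 := by
    intro h; rw [h] at ha
    simp only [Set.singleton_zero, Ideal.span_zero] at ha
    exact (mul_ne_zero hP.ne_zero hQ.ne_zero) (by rw [ha]; rfl)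
  -- x is irreducible
  have hxirr : Irreducible x := by
    constructor
    · intro h
      rw [← Ideal.span_singleton_eq_top, ← hx] at h
      exact hP.not_unit (isUnit_of_dvd_unit (dvd_pow_self 𝔭 (by omega)) (Ideal.isUnit_iff.mpr h))
    · rintro u v rfl
      have hsp : Ideal.span {u} * Ideal.span {v} = 𝔭 ^ n := by
        rw [Ideal.span_singleton_mul_span_singleton, ← hx]
      have hdvd : Ideal.span {u} ∣ 𝔭 ^ n := ⟨Ideal.span {v}, hsp.symm⟩
      obtain ⟨i, hin, hiass⟩ := (dvd_prime_pow hP n).mp hdvd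
      rw [associated_iff_eq] at hiass
      rcases Nat.eq_zero_or_pos i with hi0 | hipos
      · left
        rw [← Ideal.span_singleton_eq_top, hiass, hi0, pow_zero, Ideal.one_eq_top]
      rcases eq_or_lt_of_le hin with hieq | hilt
      · right
        have : Ideal.span {u} * Ideal.span {v} = Ideal.span {u} * 1 := by
          rw [hsp, mul_one, hiass, hieq]
        have hv := mul_left_cancel₀ (a := Ideal.span {u}) (by
          rw [hiass]; exact pow_ne_zero _ hP.ne_zero) this
        rw [← Ideal.span_singleton_eq_top, hv, Ideal.one_eq_top]
      · exfalso
        have := Nat.le_of_dvd hipos (hpow i ⟨u, hiass.symm⟩)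
        omega
  -- a is irreducible
  have hairr : Irreducible a := by
    constructor
    · intro h
      rw [← Ideal.span_singleton_eq_top, ← ha] at h
      exact hP.not_unit (isUnit_of_dvd_unit (Dvd.intro _ rfl) (Ideal.isUnit_iff.mpr h))
    · rintro u v rfl
      have hsp : Ideal.span {u} * Ideal.span {v} = 𝔭 * 𝔮 := by
        rw [Ideal.span_singleton_mul_span_singleton, ← ha]
      have h𝔭dvd : 𝔭 ∣ Ideal.span {u} * Ideal.span {v} := by rw [hsp]; exact dvd_mul_right 𝔭 𝔮
      rcases hP.dvd_mul.mp h𝔭dvd with h | h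
      · obtain ⟨I, hI⟩ := h
        have hIv : I * Ideal.span {v} = 𝔮 := by
          apply mul_left_cancel₀ hP.ne_zero
          rw [← mul_assoc, ← hI, hsp]
        rcases hQ.irreducible.isUnit_or_isUnit hIv.symm with hu | hu
        · exfalso
          apply h𝔭np
          rw [Ideal.isUnit_iff] at hu
          rw [hu, Ideal.mul_top] at hI
          exact ⟨u, by rw [← hI, Ideal.submodule_span_eq]⟩
        · right
          rw [Ideal.isUnit_iff, Ideal.span_singleton_eq_top] at hu
          exact hu
      · obtain ⟨I, hI⟩ := h
        have hIv : I * Ideal.span {u} = 𝔮 := by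
          apply mul_left_cancel₀ hP.ne_zero
          rw [← mul_assoc, ← hI, mul_comm]
          exact hsp
        rcases hQ.irreducible.isUnit_or_isUnit hIv.symm with hu | hu
        · exfalso
          apply h𝔭np
          rw [Ideal.isUnit_iff] at hu
          rw [hu, Ideal.mul_top] at hI
          exact ⟨v, by rw [← hI, Ideal.submodule_span_eq]⟩
        · left
          rw [Ideal.isUnit_iff, Ideal.span_singleton_eq_top] at hu
          exact hu
  refine ⟨x, hxirr, fun _ => a, fun _ => hairr, ?_, ?_⟩
  · rw [Finset.prod_const, Finset.card_univ, Fintype.card_fin,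
      ← span_dvd_span_iff, ← Ideal.span_singleton_pow, ← hx, ← ha, mul_pow]
    exact ⟨𝔮 ^ n, rfl⟩
  · intro T hT hdvd
    have hcard : T.card < n := by
      have := Finset.card_lt_card (Finset.ssubset_univ_iff.mpr hT)
      rwa [Finset.card_univ, Fintype.card_fin] at this
    set k := T.card with hk
    rw [Finset.prod_const, ← hk, ← span_dvd_span_iff,
      ← Ideal.span_singleton_pow, ← hx, ← ha, mul_pow] at hdvd
    have h1 : 𝔭 ^ k * 𝔭 ^ (n - k) ∣ 𝔭 ^ k * 𝔮 ^ k := by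
      rw [← pow_add]
      have : k + (n - k) = n := by omega
      rw [this]; exact hdvd
    have h2 : 𝔭 ^ (n - k) ∣ 𝔮 ^ k :=
      (mul_dvd_mul_iff_left (pow_ne_zero k hP.ne_zero)).mp h1
    have h3 : 𝔭 ∣ 𝔮 ^ k :=
      dvd_trans (dvd_pow_self 𝔭 (by omega)) h2
    have h4 : 𝔭 ∣ 𝔮 := hP.dvd_of_dvd_pow h3
    have := ((prime_dvd_prime_iff_eq hP hQ).mp h4)
    exact hPQne this
end

section
/- Let R be a Dedekind domain in which every ideal class contains a nonzero prime ideal. Then the class group of R has at most 2 elements if and only if sup{ω(α) : α irreducible in R} ≤ 2. -/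
open Ideal

set_option linter.unusedSectionVars false

open scoped Classical

section Aux
variable {R : Type*} [CommRing R] [IsDomain R] [IsDedekindDomain R]

noncomputable def cls (I : Ideal R) : ClassGroup R :=
  if h : I = 0 then 1 else ClassGroup.mk0 ⟨I, mem_nonZeroDivisors_iff_ne_zero.mpr h⟩

lemma cls_def {I : Ideal R} (h : I ≠ 0) :
    cls I = ClassGroup.mk0 ⟨I, mem_nonZeroDivisors_iff_ne_zero.mpr h⟩ := dif_neg h

lemma cls_mk0 {I : Ideal R} (h : I ∈ nonZeroDivisors (Ideal R)) :
    ClassGroup.mk0 ⟨I, h⟩ = cls I := (cls_def (mem_nonZeroDivisors_iff_ne_zero.mp h)).symm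

lemma cls_mul {I J : Ideal R} (hI : I ≠ 0) (hJ : J ≠ 0) :
    cls (I * J) = cls I * cls J := by
  rw [cls_def hI, cls_def hJ, cls_def (mul_ne_zero hI hJ),
    ← MonoidHom.map_mul ClassGroup.mk0]
  rfl

lemma cls_eq_one_iff {I : Ideal R} (hI : I ≠ 0) : cls I = 1 ↔ I.IsPrincipal := by
  rw [cls_def hI, ClassGroup.mk0_eq_one_iff]

lemma cls_span_singleton {x : R} (hx : x ≠ 0) : cls (span {x} : Ideal R) = 1 :=
  (cls_eq_one_iff (by simpa using hx)).mpr ⟨x, by simp [Ideal.submodule_span_eq]⟩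

-- products of primes
lemma prod_primes_ne_zero {s : Multiset (Ideal R)} (hs : ∀ P ∈ s, Prime P) :
    s.prod ≠ 0 :=
  Multiset.prod_ne_zero (fun h0 => (hs 0 h0).ne_zero rfl)

lemma prod_primes_eq_top {s : Multiset (Ideal R)} (hs : ∀ P ∈ s, Prime P)
    (h : s.prod = ⊤) : s = 0 := by
  rcases Multiset.empty_or_exists_mem s with h0 | ⟨P, hP⟩
  · exact h0
  · exact absurd (isUnit_of_dvd_unit (Multiset.dvd_prod hP) (by rw [h, ← Ideal.one_eq_top]; exact isUnit_one)) (hs P hP).not_unit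

lemma prod_dvd_prod_iff_le {s t : Multiset (Ideal R)} (hs : ∀ P ∈ s, Prime P)
    (ht : ∀ P ∈ t, Prime P) : s.prod ∣ t.prod ↔ s ≤ t := by
  constructor
  · intro h
    induction s using Multiset.induction generalizing t with
    | empty => simp
    | cons P s ih =>
      have hP : Prime P := hs P (Multiset.mem_cons_self _ _)
      have hPt : P ∣ t.prod := dvd_trans (by rw [Multiset.prod_cons]; exact dvd_mul_right _ _) h
      obtain ⟨Q, hQt, hPQ⟩ := hP.exists_mem_multiset_dvd hPt
      have hQ : Prime Q := ht Q hQt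
      have hPQ' : P = Q := (prime_dvd_prime_iff_eq hP hQ).mp hPQ
      subst hPQ'
      obtain ⟨t', rfl⟩ := Multiset.exists_cons_of_mem hQt
      rw [Multiset.prod_cons, Multiset.prod_cons] at h
      exact Multiset.cons_le_cons _ (ih (fun X hX => hs X (Multiset.mem_cons_of_mem hX))
        (fun X hX => ht X (Multiset.mem_cons_of_mem hX))
        ((mul_dvd_mul_iff_left hP.ne_zero).mp h))
  · exact Multiset.prod_dvd_prod_of_le

lemma exists_prime_factorization {I : Ideal R} (hI : I ≠ 0) :
    ∃ s : Multiset (Ideal R), (∀ P ∈ s, Prime P) ∧ s.prod = I := by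
  obtain ⟨s, h1, h2⟩ := UniqueFactorizationMonoid.exists_prime_factors I hI
  exact ⟨s, h1, associated_iff_eq.mp h2⟩


lemma subprod_of_irreducible {α : R} {s t : Multiset (Ideal R)}
    (hs : ∀ P ∈ s, Prime P) (hsa : s.prod = span {α}) (hα : Irreducible α)
    (hts : t ≤ s) (hp : t.prod.IsPrincipal) : t = 0 ∨ t = s := by
  have ht : ∀ P ∈ t, Prime P := fun P hP => hs P (Multiset.mem_of_le hts hP)
  obtain ⟨u, rfl⟩ := Multiset.le_iff_exists_add.mp hts
  have hu : ∀ P ∈ u, Prime P := fun P hP => hs P (by simp [hP])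
  obtain ⟨x, hx⟩ := hp
  rw [Ideal.submodule_span_eq] at hx
  have htz : t.prod ≠ 0 := prod_primes_ne_zero ht
  have hxz : x ≠ 0 := by rintro rfl; exact htz (by rw [hx]; exact Ideal.span_singleton_eq_bot.mpr rfl)
  have hdv : x ∣ α := by
    rw [← Ideal.mem_span_singleton, ← hx]
    exact Ideal.le_of_dvd ⟨u.prod, by rw [← hsa, Multiset.prod_add]⟩
      (Ideal.mem_span_singleton_self α)
  obtain ⟨y, hy⟩ := hdv
  have hkey : span {x} * span ({y} : Set R) = span {x} * u.prod := by
    rw [Ideal.span_singleton_mul_span_singleton, ← hy, ← hsa, Multiset.prod_add, hx]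
  have hcan : span ({y} : Set R) = u.prod :=
    mul_left_cancel₀ (by rw [← hx]; exact htz) hkey
  rcases hα.isUnit_or_isUnit hy with hxu | hyu
  · left
    have : t.prod = ⊤ := by rw [hx]; exact Ideal.span_singleton_eq_top.mpr hxu
    have := prod_primes_eq_top ht this
    exact this
  · right
    have : u.prod = ⊤ := by rw [← hcan]; exact Ideal.span_singleton_eq_top.mpr hyu
    have hu0 := prod_primes_eq_top hu this
    rw [hu0, add_zero]

lemma irreducible_of_subprod {α : R} {s : Multiset (Ideal R)}
    (hs : ∀ P ∈ s, Prime P) (hsa : s.prod = span {α}) (hs0 : s ≠ 0)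
    (hsub : ∀ t ≤ s, t.prod.IsPrincipal → t = 0 ∨ t = s) : Irreducible α := by
  have hαz : α ≠ 0 := by
    rintro rfl
    exact prod_primes_ne_zero hs (by rw [hsa]; exact Ideal.span_singleton_eq_bot.mpr rfl)
  constructor
  · intro hun
    exact hs0 (prod_primes_eq_top hs (by rw [hsa]; exact Ideal.span_singleton_eq_top.mpr hun))
  · intro x y hxy
    by_cases hxu : IsUnit x
    · exact Or.inl hxu
    have hxz : x ≠ 0 := by rintro rfl; exact hαz (by simp [hxy])
    obtain ⟨t, htp, htx⟩ := exists_prime_factorization (I := span ({x} : Set R))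
      (by simpa using hxz)
    have hts : t ≤ s := by
      rw [← prod_dvd_prod_iff_le htp hs, htx, hsa]
      exact ⟨span {y}, by rw [Ideal.span_singleton_mul_span_singleton, hxy]⟩
    rcases hsub t hts ⟨x, by rw [htx, Ideal.submodule_span_eq]⟩ with h0 | hfull
    · exact absurd (Ideal.span_singleton_eq_top.mp (by rw [← htx, h0, Multiset.prod_zero, Ideal.one_eq_top])) hxu
    · right
      have : span ({x} : Set R) * span ({y} : Set R) = span ({x} : Set R) * 1 := by
        rw [Ideal.span_singleton_mul_span_singleton, ← hxy, mul_one, ← hsa, ← hfull, htx]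
      have := mul_left_cancel₀ (by simpa using hxz) this
      exact Ideal.span_singleton_eq_top.mp (by rw [this, Ideal.one_eq_top])

end Aux

section Enum
variable {M : Type*} [DecidableEq M]

lemma le_cons_decomp {t u : Multiset M} {a : M} (h : t ≤ a ::ₘ u) :
    t ≤ u ∨ ∃ t', t = a ::ₘ t' ∧ t' ≤ u := by
  by_cases ha : a ∈ t
  · right
    refine ⟨t.erase a, (Multiset.cons_erase ha).symm, ?_⟩
    have := Multiset.erase_le_erase a h
    rwa [Multiset.erase_cons_head] at this
  · left
    exact (Multiset.le_cons_of_notMem ha).mp h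

lemma sub2 {t : Multiset M} {x y : M} (h : t ≤ {x, y}) :
    t = 0 ∨ t = {x} ∨ t = {y} ∨ t = {x, y} := by
  rcases le_cons_decomp h with h1 | ⟨t', rfl, h1⟩
  · rcases Multiset.le_singleton.mp h1 with rfl | rfl
    · exact Or.inl rfl
    · exact Or.inr (Or.inr (Or.inl rfl))
  · rcases Multiset.le_singleton.mp h1 with rfl | rfl
    · exact Or.inr (Or.inl rfl)
    · exact Or.inr (Or.inr (Or.inr rfl))

lemma sub3 {t : Multiset M} {x y z : M} (h : t ≤ {x, y, z}) :
    t = 0 ∨ t = {x} ∨ t = {y} ∨ t = {z} ∨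
      t = {x, y} ∨ t = {x, z} ∨ t = {y, z} ∨ t = {x, y, z} := by
  rcases le_cons_decomp h with h1 | ⟨t', rfl, h1⟩
  · rcases sub2 h1 with rfl | rfl | rfl | rfl
    · exact Or.inl rfl
    · tauto
    · tauto
    · tauto
  · rcases sub2 h1 with rfl | rfl | rfl | rfl
    · tauto
    · tauto
    · tauto
    · tauto

end Enum

lemma two_cover_mul_eq_one {G : Type*} [Group G] (h2 : ∃ a b : G, ∀ g : G, g = a ∨ g = b)
    {g h : G} (hg : g ≠ 1) (hh : h ≠ 1) : g * h = 1 := by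
  obtain ⟨a, b, hab⟩ := h2
  have key : ∀ x y : G, x ≠ 1 → y ≠ 1 → x = y := by
    intro x y hx hy
    rcases hab 1 with h1 | h1 <;> rcases hab x with hxa | hxa <;> rcases hab y with hya | hya <;>
      first
        | exact hxa.trans hya.symm
        | exact absurd (hxa.trans h1.symm) hx
        | exact absurd (hya.trans h1.symm) hy
  by_contra hne
  have h1 : g * h = g := key (g * h) g hne hg
  exact hh (mul_left_cancel (a := g) (by rw [h1, mul_one]))

section Forward
variable {R : Type*} [CommRing R] [IsDomain R] [IsDedekindDomain R]

lemma forward_omega (h2 : ∃ a b : ClassGroup R, ∀ g : ClassGroup R, g = a ∨ g = b)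
    {α : R} (hα : Irreducible α) {t : ℕ} (a : Fin t → R)
    (ha : ∀ i, Irreducible (a i)) (hdvd : α ∣ ∏ i, a i) :
    ∃ T : Finset (Fin t), T.card ≤ 2 ∧ α ∣ ∏ i ∈ T, a i := by
  classical
  have hαz : α ≠ 0 := hα.ne_zero
  obtain ⟨s, hs, hsa⟩ := exists_prime_factorization (I := span ({α} : Set R))
    (by simpa using hαz)
  have hs0 : s ≠ 0 := by
    rintro rfl
    exact hα.not_isUnit (Ideal.span_singleton_eq_top.mp
      (by rw [← hsa, Multiset.prod_zero, Ideal.one_eq_top]))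
  have hcard : Multiset.card s ≤ 2 := by
    by_contra hc
    push_neg at hc
    have hnp : ∀ P ∈ s, ¬ (P : Ideal R).IsPrincipal := by
      intro P hP hprin
      rcases subprod_of_irreducible hs hsa hα (Multiset.singleton_le.mpr hP)
          (by simpa using hprin) with h0 | hfull
      · simp at h0
      · rw [← hfull] at hc; simp at hc
    obtain ⟨P, hPmem⟩ := Multiset.exists_mem_of_ne_zero hs0
    obtain ⟨s1, rfl⟩ := Multiset.exists_cons_of_mem hPmem
    have hs1 : s1 ≠ 0 := by rintro rfl; simp at hc
    obtain ⟨Q, hQmem⟩ := Multiset.exists_mem_of_ne_zero hs1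
    obtain ⟨s2, rfl⟩ := Multiset.exists_cons_of_mem hQmem
    have hs2 : s2 ≠ 0 := by rintro rfl; simp at hc
    have hPp : Prime P := hs P (by simp)
    have hQp : Prime Q := hs Q (by simp)
    have hc1 : cls P ≠ 1 := fun h => hnp P (by simp) ((cls_eq_one_iff hPp.ne_zero).mp h)
    have hc2 : cls Q ≠ 1 := fun h => hnp Q (by simp) ((cls_eq_one_iff hQp.ne_zero).mp h)
    have hPQ : (P * Q).IsPrincipal := by
      refine (cls_eq_one_iff (mul_ne_zero hPp.ne_zero hQp.ne_zero)).mp ?_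
      rw [cls_mul hPp.ne_zero hQp.ne_zero]
      exact two_cover_mul_eq_one h2 hc1 hc2
    have hle : ({P, Q} : Multiset (Ideal R)) ≤ P ::ₘ Q ::ₘ s2 :=
      Multiset.cons_le_cons _ (Multiset.cons_le_cons _ (Multiset.zero_le _))
    rcases subprod_of_irreducible hs hsa hα hle
        (by simpa [Multiset.prod_cons] using hPQ) with h0 | hfull
    · simp at h0
    · rw [← hfull] at hc
      simp at hc
  have hid : span ({α} : Set R) ∣ ∏ i, span ({a i} : Set R) := by
    rw [prod_span_singleton]
    exact dvd_iff_le.mpr (span_singleton_le_span_singleton.mpr hdvd)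
  have hcpos : 1 ≤ Multiset.card s := by
    rcases Nat.eq_zero_or_pos (Multiset.card s) with h | h
    · exact absurd (Multiset.card_eq_zero.mp h) hs0
    · exact h
  rcases (by omega : Multiset.card s = 1 ∨ Multiset.card s = 2) with h1 | h1
  · obtain ⟨P, rfl⟩ := Multiset.card_eq_one.mp h1
    rw [Multiset.prod_singleton] at hsa
    have hprime : Prime (span ({α} : Set R) : Ideal R) := hsa ▸ hs P (by simp)
    obtain ⟨i, -, hi⟩ := (hprime.dvd_finset_prod_iff _).mp hid
    exact ⟨{i}, by simp, by
      rw [Finset.prod_singleton]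
      exact span_singleton_le_span_singleton.mp (le_of_dvd hi)⟩
  · obtain ⟨P, Q, rfl⟩ := Multiset.card_eq_two.mp h1
    have hsa' : P * Q = span ({α} : Set R) := by
      rw [← hsa]; simp [Multiset.prod_cons]
    have hP : Prime P := hs P (by simp)
    have hQ : Prime Q := hs Q (by simp)
    rw [← hsa'] at hid
    obtain ⟨i, -, hPi⟩ := (hP.dvd_finset_prod_iff _).mp (dvd_trans (dvd_mul_right P Q) hid)
    by_cases hPQi : P * Q ∣ span ({a i} : Set R)
    · refine ⟨{i}, by simp, ?_⟩
      rw [Finset.prod_singleton]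
      exact span_singleton_le_span_singleton.mp (le_of_dvd (hsa' ▸ hPQi))
    obtain ⟨j, -, hQj⟩ := (hQ.dvd_finset_prod_iff _).mp (dvd_trans (dvd_mul_left Q P) hid)
    by_cases hij : i = j
    · subst hij
      by_cases hPQ : P = Q
      · subst hPQ
        obtain ⟨B, hB⟩ := id hPi
        have hPB : ¬ P ∣ B := fun h => hPQi (by rw [hB]; exact mul_dvd_mul_left P h)
        have hrest : P ∣ ∏ k ∈ Finset.univ.erase i, span ({a k} : Set R) := by
          have h0 : P * P ∣ span ({a i} : Set R) * ∏ k ∈ Finset.univ.erase i, span ({a k} : Set R) := by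
            rw [Finset.mul_prod_erase Finset.univ (fun k => span ({a k} : Set R))
              (Finset.mem_univ i)]
            exact hid
          rw [hB, mul_assoc] at h0
          have h1 := (mul_dvd_mul_iff_left hP.ne_zero).mp h0
          rcases hP.dvd_mul.mp h1 with h | h
          · exact absurd h hPB
          · exact h
        obtain ⟨j, hjmem, hPj⟩ := (hP.dvd_finset_prod_iff _).mp hrest
        have hij : j ≠ i := (Finset.mem_erase.mp hjmem).1
        refine ⟨{i, j}, (Finset.card_insert_le _ _).trans (by simp), ?_⟩
        rw [Finset.prod_pair (Ne.symm hij)]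
        have hdd : P * P ∣ span ({a i} : Set R) * span ({a j} : Set R) := mul_dvd_mul hPi hPj
        rw [span_singleton_mul_span_singleton] at hdd
        exact span_singleton_le_span_singleton.mp (le_of_dvd (hsa' ▸ hdd))
      · exfalso
        apply hPQi
        obtain ⟨B, hB⟩ := hPi
        rw [hB] at hQj
        rcases hQ.dvd_mul.mp hQj with h | h
        · exact absurd ((prime_dvd_prime_iff_eq hQ hP).mp h).symm hPQ
        · rw [hB]; exact mul_dvd_mul_left P h
    · refine ⟨{i, j}, (Finset.card_insert_le _ _).trans (by simp), ?_⟩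
      rw [Finset.prod_pair hij]
      have hdd := mul_dvd_mul hPi hQj
      rw [span_singleton_mul_span_singleton] at hdd
      exact span_singleton_le_span_singleton.mp (le_of_dvd (hsa' ▸ hdd))

end Forward

section Backward
variable {R : Type*} [CommRing R] [IsDomain R] [IsDedekindDomain R]

lemma exists_prime_cls
    (hprimes : ∀ c : ClassGroup R, ∃ (𝔭 : Ideal R) (h𝔭 : 𝔭 ∈ nonZeroDivisors (Ideal R)),
      𝔭.IsPrime ∧ 𝔭 ≠ ⊥ ∧ ClassGroup.mk0 ⟨𝔭, h𝔭⟩ = c) (c : ClassGroup R) :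
    ∃ P : Ideal R, Prime P ∧ cls P = c := by
  obtain ⟨P, h0, hpr, hbot, hc⟩ := hprimes c
  exact ⟨P, Ideal.prime_of_isPrime hbot hpr, (cls_mk0 h0).symm.trans hc⟩

lemma exists_irreducible_gen {s : Multiset (Ideal R)} (hs : ∀ P ∈ s, Prime P) (hs0 : s ≠ 0)
    (hcls : cls s.prod = 1)
    (hsub : ∀ t ≤ s, t ≠ 0 → t ≠ s → cls t.prod ≠ 1) :
    ∃ x : R, Irreducible x ∧ span {x} = s.prod := by
  have hz := prod_primes_ne_zero hs
  obtain ⟨x, hx⟩ := (cls_eq_one_iff hz).mp hcls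
  rw [Ideal.submodule_span_eq] at hx
  refine ⟨x, irreducible_of_subprod hs hx hs0 ?_, hx.symm⟩
  intro t ht hp
  by_contra hcon
  push_neg at hcon
  exact hsub t ht hcon.1 hcon.2
    ((cls_eq_one_iff (prod_primes_ne_zero (fun P hP => hs P (Multiset.mem_of_le ht hP)))).mpr hp)

lemma finset_fin3_enum : ∀ T : Finset (Fin 3), T.card ≤ 2 →
    T = ∅ ∨ T = {0} ∨ T = {1} ∨ T = {2} ∨ T = {0,1} ∨ T = {0,2} ∨ T = {1,2} := by
  decide

lemma cls_ne_of_ne {P Q : Ideal R} {c d : ClassGroup R} (hP : cls P = c) (hQ : cls Q = d)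
    (h : c ≠ d) : P ≠ Q := fun hE => h (by rw [← hP, ← hQ, hE])

end Backward

section Cases
variable {R : Type*} [CommRing R] [IsDomain R] [IsDedekindDomain R]

lemma caseA
    (hω : ∀ α : R, Irreducible α →
        ∀ (t : ℕ) (a : Fin t → R), (∀ i, Irreducible (a i)) → α ∣ ∏ i, a i →
          ∃ T : Finset (Fin t), T.card ≤ 2 ∧ α ∣ ∏ i ∈ T, a i)
    (hprimes : ∀ c : ClassGroup R, ∃ (𝔭 : Ideal R) (h𝔭 : 𝔭 ∈ nonZeroDivisors (Ideal R)),
      𝔭.IsPrime ∧ 𝔭 ≠ ⊥ ∧ ClassGroup.mk0 ⟨𝔭, h𝔭⟩ = c)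
    {c : ClassGroup R} (hc1 : c ≠ 1) (hc2 : c * c ≠ 1) : False := by
  classical
  obtain ⟨P, hP, hPc⟩ := exists_prime_cls hprimes c
  obtain ⟨Q, hQ, hQc⟩ := exists_prime_cls hprimes c⁻¹
  obtain ⟨S, hS, hSc⟩ := exists_prime_cls hprimes (c * c)
  obtain ⟨W, hW, hWc⟩ := exists_prime_cls hprimes (c * c)⁻¹
  have hPz := hP.ne_zero
  have hQz := hQ.ne_zero
  have hSz := hS.ne_zero
  have hWz := hW.ne_zero
  have hPQ : P ≠ Q := cls_ne_of_ne hPc hQc (fun h => hc2 (mul_eq_one_iff_eq_inv.mpr h))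
  have hWQ : W ≠ Q := cls_ne_of_ne hWc hQc (fun h => hc1 (by
    have h2 : c * c = c := by rw [← inv_inv (c * c), h, inv_inv]
    exact (mul_left_cancel (a := c) (by rw [h2, mul_one]))))
  have hSP : S ≠ P := cls_ne_of_ne hSc hPc
    (fun h => hc1 (mul_left_cancel (a := c) (by rw [h, mul_one])))
  have prodPPW : ({P, P, W} : Multiset (Ideal R)).prod = P * P * W := by
    simp [Multiset.prod_cons, mul_assoc]
  have prodPQ : ({P, Q} : Multiset (Ideal R)).prod = P * Q := by
    simp [Multiset.prod_cons]
  have prodSW : ({S, W} : Multiset (Ideal R)).prod = S * W := by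
    simp [Multiset.prod_cons]
  have clsPW : cls (P * W) ≠ 1 := by
    rw [cls_mul hPz hWz, hPc, hWc]
    intro h
    have h' : c = c * c := mul_inv_eq_one.mp h
    exact hc1 (mul_left_cancel (a := c) (by rw [← h', mul_one])).symm
  -- irreducible generators
  obtain ⟨α, hαirr, hα⟩ := exists_irreducible_gen (s := {P, P, W})
    (by intro X hX; simp at hX; rcases hX with rfl | rfl | rfl <;> assumption)
    (by simp)
    (by rw [prodPPW, cls_mul (mul_ne_zero hPz hPz) hWz, cls_mul hPz hPz, hPc, hWc]; group)
    (by intro u hu hu0 hune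
        rcases sub3 hu with rfl | rfl | rfl | rfl | rfl | rfl | rfl | rfl
        · exact absurd rfl hu0
        · rw [Multiset.prod_singleton, hPc]; exact hc1
        · rw [Multiset.prod_singleton, hPc]; exact hc1
        · rw [Multiset.prod_singleton, hWc]
          intro h; exact hc2 (by rwa [inv_eq_one] at h)
        · rw [show ({P, P} : Multiset (Ideal R)).prod = P * P by simp [Multiset.prod_cons],
            cls_mul hPz hPz, hPc]
          exact hc2
        · rw [show ({P, W} : Multiset (Ideal R)).prod = P * W by simp [Multiset.prod_cons]]
          exact clsPW
        · rw [show ({P, W} : Multiset (Ideal R)).prod = P * W by simp [Multiset.prod_cons]]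
          exact clsPW
        · exact absurd rfl hune)
  obtain ⟨β, hβirr, hβ⟩ := exists_irreducible_gen (s := {P, Q})
    (by intro X hX; simp at hX; rcases hX with rfl | rfl <;> assumption)
    (by simp)
    (by rw [prodPQ, cls_mul hPz hQz, hPc, hQc]; group)
    (by intro u hu hu0 hune
        rcases sub2 hu with rfl | rfl | rfl | rfl
        · exact absurd rfl hu0
        · rw [Multiset.prod_singleton, hPc]; exact hc1
        · rw [Multiset.prod_singleton, hQc]; simpa using hc1
        · exact absurd rfl hune)
  obtain ⟨δ, hδirr, hδ⟩ := exists_irreducible_gen (s := {S, W})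
    (by intro X hX; simp at hX; rcases hX with rfl | rfl <;> assumption)
    (by simp)
    (by rw [prodSW, cls_mul hSz hWz, hSc, hWc]; group)
    (by intro u hu hu0 hune
        rcases sub2 hu with rfl | rfl | rfl | rfl
        · exact absurd rfl hu0
        · rw [Multiset.prod_singleton, hSc]; exact hc2
        · rw [Multiset.prod_singleton, hWc]
          intro h; exact hc2 (by rwa [inv_eq_one] at h)
        · exact absurd rfl hune)
  rw [prodPPW] at hα
  rw [prodPQ] at hβ
  rw [prodSW] at hδ
  -- α ∣ β * β * δ
  have hdvd : α ∣ β * β * δ := by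
    refine span_singleton_le_span_singleton.mp (le_of_dvd ?_)
    rw [← span_singleton_mul_span_singleton, ← span_singleton_mul_span_singleton,
      hα, hβ, hδ]
    exact ⟨Q * Q * S, by ring⟩
  obtain ⟨T, hT2, hTd⟩ := hω α hαirr 3 ![β, β, δ]
    (by intro i; fin_cases i <;> simpa)
    (by have : (∏ i, ![β, β, δ] i) = β * β * δ := by simp [Fin.prod_univ_three]
        rw [this]; exact hdvd)
  -- translate a divisibility α ∣ x into multiset inequality
  have hppw : ∀ X ∈ ({P, P, W} : Multiset (Ideal R)), Prime X := by
    intro X hX; simp at hX; rcases hX with rfl | rfl | rfl <;> assumption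
  have toLe : ∀ (u : Multiset (Ideal R)), (∀ X ∈ u, Prime X) →
      span ({α} : Set R) ∣ u.prod → ({P, P, W} : Multiset (Ideal R)) ≤ u := by
    intro u hu hdv
    exact (prod_dvd_prod_iff_le hppw hu).mp (by rw [prodPPW, ← hα]; exact hdv)
  rcases finset_fin3_enum T hT2 with rfl | rfl | rfl | rfl | rfl | rfl | rfl
  · rw [Finset.prod_empty] at hTd
    exact hαirr.not_isUnit (isUnit_of_dvd_one hTd)
  · rw [show (∏ i ∈ ({0} : Finset (Fin 3)), ![β, β, δ] i) = β by simp] at hTd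
    have := toLe {P, Q} (by intro X hX; simp at hX; rcases hX with rfl | rfl <;> assumption)
      (by rw [prodPQ, ← hβ]; exact dvd_iff_le.mpr (span_singleton_le_span_singleton.mpr hTd))
    have := Multiset.card_le_card this
    simp at this
  · rw [show (∏ i ∈ ({1} : Finset (Fin 3)), ![β, β, δ] i) = β by simp] at hTd
    have := toLe {P, Q} (by intro X hX; simp at hX; rcases hX with rfl | rfl <;> assumption)
      (by rw [prodPQ, ← hβ]; exact dvd_iff_le.mpr (span_singleton_le_span_singleton.mpr hTd))
    have := Multiset.card_le_card this
    simp at this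
  · rw [show (∏ i ∈ ({2} : Finset (Fin 3)), ![β, β, δ] i) = δ by simp] at hTd
    have := toLe {S, W} (by intro X hX; simp at hX; rcases hX with rfl | rfl <;> assumption)
      (by rw [prodSW, ← hδ]; exact dvd_iff_le.mpr (span_singleton_le_span_singleton.mpr hTd))
    have := Multiset.card_le_card this
    simp at this
  · -- T = {0,1} : α ∣ β * β
    rw [show (∏ i ∈ ({0, 1} : Finset (Fin 3)), ![β, β, δ] i) = β * β by
      rw [Finset.prod_pair (by decide)]; simp] at hTd
    have hle := toLe {P, Q, P, Q}
      (by intro X hX; simp at hX; rcases hX with rfl | rfl | rfl | rfl <;> assumption)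
      (by rw [show ({P, Q, P, Q} : Multiset (Ideal R)).prod = (P * Q) * (P * Q) by
            simp [Multiset.prod_cons]; ring
          , ← hβ, span_singleton_mul_span_singleton]
          exact dvd_iff_le.mpr (span_singleton_le_span_singleton.mpr hTd))
    by_cases hWP : W = P
    · subst hWP
      have := Multiset.count_le_of_le W hle
      simp [Multiset.count_cons, Multiset.count_singleton, hPQ, hWQ] at this
    · have := Multiset.count_le_of_le W hle
      simp [Multiset.count_cons, Multiset.count_singleton, hWP, hWQ] at this
  · -- T = {0,2} : α ∣ β * δ
    rw [show (∏ i ∈ ({0, 2} : Finset (Fin 3)), ![β, β, δ] i) = β * δ by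
      rw [Finset.prod_pair (by decide)]; simp] at hTd
    have hle := toLe {P, Q, S, W}
      (by intro X hX; simp at hX; rcases hX with rfl | rfl | rfl | rfl <;> assumption)
      (by rw [show ({P, Q, S, W} : Multiset (Ideal R)).prod = (P * Q) * (S * W) by
            simp [Multiset.prod_cons]; ring
          , ← hβ, ← hδ, span_singleton_mul_span_singleton]
          exact dvd_iff_le.mpr (span_singleton_le_span_singleton.mpr hTd))
    by_cases hWP : W = P
    · subst hWP
      have := Multiset.count_le_of_le W hle
      simp [Multiset.count_cons, Multiset.count_singleton, hPQ, hWQ, hSP] at this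
    · have := Multiset.count_le_of_le P hle
      simp [Multiset.count_cons, Multiset.count_singleton, hPQ, Ne.symm hSP,
        (fun h => hWP h.symm : P ≠ W), hWP] at this
  · -- T = {1,2} : α ∣ β * δ
    rw [show (∏ i ∈ ({1, 2} : Finset (Fin 3)), ![β, β, δ] i) = β * δ by
      rw [Finset.prod_pair (by decide)]; simp] at hTd
    have hle := toLe {P, Q, S, W}
      (by intro X hX; simp at hX; rcases hX with rfl | rfl | rfl | rfl <;> assumption)
      (by rw [show ({P, Q, S, W} : Multiset (Ideal R)).prod = (P * Q) * (S * W) by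
            simp [Multiset.prod_cons]; ring
          , ← hβ, ← hδ, span_singleton_mul_span_singleton]
          exact dvd_iff_le.mpr (span_singleton_le_span_singleton.mpr hTd))
    by_cases hWP : W = P
    · subst hWP
      have := Multiset.count_le_of_le W hle
      simp [Multiset.count_cons, Multiset.count_singleton, hPQ, hWQ, hSP] at this
    · have := Multiset.count_le_of_le P hle
      simp [Multiset.count_cons, Multiset.count_singleton, hPQ, Ne.symm hSP,
        (fun h => hWP h.symm : P ≠ W), hWP] at this

lemma caseB
    (hω : ∀ α : R, Irreducible α →
        ∀ (t : ℕ) (a : Fin t → R), (∀ i, Irreducible (a i)) → α ∣ ∏ i, a i →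
          ∃ T : Finset (Fin t), T.card ≤ 2 ∧ α ∣ ∏ i ∈ T, a i)
    (hprimes : ∀ c : ClassGroup R, ∃ (𝔭 : Ideal R) (h𝔭 : 𝔭 ∈ nonZeroDivisors (Ideal R)),
      𝔭.IsPrime ∧ 𝔭 ≠ ⊥ ∧ ClassGroup.mk0 ⟨𝔭, h𝔭⟩ = c)
    (hsq : ∀ g : ClassGroup R, g * g = 1)
    {c₁ c₂ : ClassGroup R} (h1 : c₁ ≠ 1) (h2 : c₂ ≠ 1) (h12 : c₂ ≠ c₁) : False := by
  classical
  have h121 : c₁ * c₂ ≠ 1 := fun h =>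
    h12 ((inv_eq_of_mul_eq_one_right h).symm.trans (inv_eq_of_mul_eq_one_right (hsq c₁)))
  obtain ⟨P, hP, hPc⟩ := exists_prime_cls hprimes c₁
  obtain ⟨Q, hQ, hQc⟩ := exists_prime_cls hprimes c₂
  obtain ⟨W, hW, hWc⟩ := exists_prime_cls hprimes (c₁ * c₂)
  have hPz := hP.ne_zero
  have hQz := hQ.ne_zero
  have hWz := hW.ne_zero
  have hPQ : P ≠ Q := cls_ne_of_ne hPc hQc (fun h => h12 h.symm)
  have hWP : W ≠ P := cls_ne_of_ne hWc hPc
    (fun h => h2 (mul_left_cancel (a := c₁) (by rw [h, mul_one])))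
  have hWQ : W ≠ Q := cls_ne_of_ne hWc hQc
    (fun h => h1 (mul_right_cancel (b := c₂) (by rw [h, one_mul])))
  have prodPQW : ({P, Q, W} : Multiset (Ideal R)).prod = P * Q * W := by
    simp [Multiset.prod_cons, mul_assoc]
  obtain ⟨γ, hγirr, hγ⟩ := exists_irreducible_gen (s := {P, Q, W})
    (by intro X hX; simp at hX; rcases hX with rfl | rfl | rfl <;> assumption)
    (by simp)
    (by rw [prodPQW, cls_mul (mul_ne_zero hPz hQz) hWz, cls_mul hPz hQz, hPc, hQc, hWc]
        exact hsq _)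
    (by intro u hu hu0 hune
        rcases sub3 hu with rfl | rfl | rfl | rfl | rfl | rfl | rfl | rfl
        · exact absurd rfl hu0
        · rw [Multiset.prod_singleton, hPc]; exact h1
        · rw [Multiset.prod_singleton, hQc]; exact h2
        · rw [Multiset.prod_singleton, hWc]; exact h121
        · rw [show ({P, Q} : Multiset (Ideal R)).prod = P * Q by simp [Multiset.prod_cons],
            cls_mul hPz hQz, hPc, hQc]
          exact h121
        · rw [show ({P, W} : Multiset (Ideal R)).prod = P * W by simp [Multiset.prod_cons],
            cls_mul hPz hWz, hPc, hWc, ← mul_assoc, hsq c₁, one_mul]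
          exact h2
        · rw [show ({Q, W} : Multiset (Ideal R)).prod = Q * W by simp [Multiset.prod_cons],
            cls_mul hQz hWz, hQc, hWc, mul_comm c₁ c₂, ← mul_assoc, hsq c₂, one_mul]
          exact h1
        · exact absurd rfl hune)
  have mk2 : ∀ (X : Ideal R) (d : ClassGroup R), Prime X → cls X = d → d ≠ 1 →
      ∃ x : R, Irreducible x ∧ span ({x} : Set R) = X * X := by
    intro X d hX hXd hd1
    obtain ⟨x, hxirr, hx⟩ := exists_irreducible_gen (s := {X, X})
      (by intro Y hY; simp at hY; rcases hY with rfl | rfl <;> exact hX)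
      (by simp)
      (by rw [show ({X, X} : Multiset (Ideal R)).prod = X * X by simp [Multiset.prod_cons],
          cls_mul hX.ne_zero hX.ne_zero, hXd]
          exact hsq d)
      (by intro u hu hu0 hune
          rcases sub2 hu with rfl | rfl | rfl | rfl
          · exact absurd rfl hu0
          · rw [Multiset.prod_singleton, hXd]; exact hd1
          · rw [Multiset.prod_singleton, hXd]; exact hd1
          · exact absurd rfl hune)
    exact ⟨x, hxirr, by rw [hx]; simp [Multiset.prod_cons]⟩
  obtain ⟨α, hαirr, hα⟩ := mk2 P c₁ hP hPc h1
  obtain ⟨β, hβirr, hβ⟩ := mk2 Q c₂ hQ hQc h2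
  obtain ⟨δ, hδirr, hδ⟩ := mk2 W (c₁ * c₂) hW hWc h121
  rw [prodPQW] at hγ
  have hdvd : γ ∣ α * β * δ := by
    refine span_singleton_le_span_singleton.mp (le_of_dvd ?_)
    rw [← span_singleton_mul_span_singleton, ← span_singleton_mul_span_singleton,
      hγ, hα, hβ, hδ]
    exact ⟨P * Q * W, by ring⟩
  obtain ⟨T, hT2, hTd⟩ := hω γ hγirr 3 ![α, β, δ]
    (by intro i; fin_cases i <;> simpa)
    (by have : (∏ i, ![α, β, δ] i) = α * β * δ := by simp [Fin.prod_univ_three]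
        rw [this]; exact hdvd)
  have hpqw : ∀ X ∈ ({P, Q, W} : Multiset (Ideal R)), Prime X := by
    intro X hX; simp at hX; rcases hX with rfl | rfl | rfl <;> assumption
  have toLe : ∀ (u : Multiset (Ideal R)), (∀ X ∈ u, Prime X) →
      span ({γ} : Set R) ∣ u.prod → ({P, Q, W} : Multiset (Ideal R)) ≤ u := by
    intro u hu hdv
    exact (prod_dvd_prod_iff_le hpqw hu).mp (by rw [prodPQW, ← hγ]; exact hdv)
  have toDvd : ∀ x : R, γ ∣ x → span ({γ} : Set R) ∣ span ({x} : Set R) := fun x hx =>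
    dvd_iff_le.mpr (span_singleton_le_span_singleton.mpr hx)
  rcases finset_fin3_enum T hT2 with rfl | rfl | rfl | rfl | rfl | rfl | rfl
  · rw [Finset.prod_empty] at hTd
    exact hγirr.not_isUnit (isUnit_of_dvd_one hTd)
  · rw [show (∏ i ∈ ({0} : Finset (Fin 3)), ![α, β, δ] i) = α by simp] at hTd
    have hle := toLe {P, P}
      (by intro X hX; simp at hX; rcases hX with rfl | rfl <;> assumption)
      (by rw [show ({P, P} : Multiset (Ideal R)).prod = P * P by simp [Multiset.prod_cons],
          ← hα]
          exact toDvd _ hTd)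
    have := Multiset.card_le_card hle
    simp at this
  · rw [show (∏ i ∈ ({1} : Finset (Fin 3)), ![α, β, δ] i) = β by simp] at hTd
    have hle := toLe {Q, Q}
      (by intro X hX; simp at hX; rcases hX with rfl | rfl <;> assumption)
      (by rw [show ({Q, Q} : Multiset (Ideal R)).prod = Q * Q by simp [Multiset.prod_cons],
          ← hβ]
          exact toDvd _ hTd)
    have := Multiset.card_le_card hle
    simp at this
  · rw [show (∏ i ∈ ({2} : Finset (Fin 3)), ![α, β, δ] i) = δ by simp] at hTd
    have hle := toLe {W, W}
      (by intro X hX; simp at hX; rcases hX with rfl | rfl <;> assumption)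
      (by rw [show ({W, W} : Multiset (Ideal R)).prod = W * W by simp [Multiset.prod_cons],
          ← hδ]
          exact toDvd _ hTd)
    have := Multiset.card_le_card hle
    simp at this
  · rw [show (∏ i ∈ ({0, 1} : Finset (Fin 3)), ![α, β, δ] i) = α * β by
      rw [Finset.prod_pair (by decide)]; simp] at hTd
    have hle := toLe {P, P, Q, Q}
      (by intro X hX; simp at hX; rcases hX with rfl | rfl | rfl | rfl <;> assumption)
      (by rw [show ({P, P, Q, Q} : Multiset (Ideal R)).prod = (P * P) * (Q * Q) by
            simp [Multiset.prod_cons]; ring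
          , ← hα, ← hβ, span_singleton_mul_span_singleton]
          exact toDvd _ hTd)
    have := Multiset.count_le_of_le W hle
    simp [Multiset.count_cons, Multiset.count_singleton, hWP, hWQ] at this
  · rw [show (∏ i ∈ ({0, 2} : Finset (Fin 3)), ![α, β, δ] i) = α * δ by
      rw [Finset.prod_pair (by decide)]; simp] at hTd
    have hle := toLe {P, P, W, W}
      (by intro X hX; simp at hX; rcases hX with rfl | rfl | rfl | rfl <;> assumption)
      (by rw [show ({P, P, W, W} : Multiset (Ideal R)).prod = (P * P) * (W * W) by
            simp [Multiset.prod_cons]; ring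
          , ← hα, ← hδ, span_singleton_mul_span_singleton]
          exact toDvd _ hTd)
    have := Multiset.count_le_of_le Q hle
    simp [Multiset.count_cons, Multiset.count_singleton, Ne.symm hPQ, Ne.symm hWQ] at this
  · rw [show (∏ i ∈ ({1, 2} : Finset (Fin 3)), ![α, β, δ] i) = β * δ by
      rw [Finset.prod_pair (by decide)]; simp] at hTd
    have hle := toLe {Q, Q, W, W}
      (by intro X hX; simp at hX; rcases hX with rfl | rfl | rfl | rfl <;> assumption)
      (by rw [show ({Q, Q, W, W} : Multiset (Ideal R)).prod = (Q * Q) * (W * W) by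
            simp [Multiset.prod_cons]; ring
          , ← hβ, ← hδ, span_singleton_mul_span_singleton]
          exact toDvd _ hTd)
    have := Multiset.count_le_of_le P hle
    simp [Multiset.count_cons, Multiset.count_singleton, hPQ, Ne.symm hWP] at this

end Cases

theorem class_number_le_two_iff_omega_le_two
    {R : Type*} [CommRing R] [IsDomain R] [IsDedekindDomain R]
    (hprimes : ∀ c : ClassGroup R, ∃ (𝔭 : Ideal R) (h𝔭 : 𝔭 ∈ nonZeroDivisors (Ideal R)),
      𝔭.IsPrime ∧ 𝔭 ≠ ⊥ ∧ ClassGroup.mk0 ⟨𝔭, h𝔭⟩ = c) :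
    (∃ a b : ClassGroup R, ∀ g : ClassGroup R, g = a ∨ g = b) ↔
      ∀ α : R, Irreducible α →
        ∀ (t : ℕ) (a : Fin t → R), (∀ i, Irreducible (a i)) → α ∣ ∏ i, a i →
          ∃ T : Finset (Fin t), T.card ≤ 2 ∧ α ∣ ∏ i ∈ T, a i := by
  constructor
  · intro h2 α hα t a ha hd
    exact forward_omega h2 hα a ha hd
  · intro hω
    by_contra hn
    push_neg at hn
    obtain ⟨c₁, hc1a, -⟩ := hn 1 1
    by_cases hsq : ∀ g : ClassGroup R, g * g = 1
    · obtain ⟨c₂, hc2a, hc2b⟩ := hn 1 c₁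
      exact caseB hω hprimes hsq hc1a hc2a hc2b
    · push_neg at hsq
      obtain ⟨c, hc⟩ := hsq
      exact caseA hω hprimes (fun h => hc (by rw [h, one_mul])) hc
end
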